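/- Let k, λ > 0 and 0 < δ ≤ 1. Suppose h : [0,∞) → (0,1] and q̃ : [0,∞) → [δ,1] are continuous, and for every ε > 0 one has e^{(λ+ε)τ}·h(τ) → +∞ and e^{(λ−ε)τ}·h(τ) → 0 as τ → ∞. Then for every τ ≥ 0 the tail integral T(τ) := ∫_τ^∞ q̃(σ)·h(σ)^k dσ is finite, and for every ε > 0 one has e^{(kλ+ε)τ}·T(τ) → +∞ and e^{(kλ−ε)τ}·T(τ) → 0 as τ → ∞; equivalently, (ln T(τ))/τ → −kλ as τ → ∞. -/

import Mathlib

open Real Set MeasureTheory Filter Topology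

lemma my_integral_exp_neg_mul_Ioi {b : ℝ} (hb : 0 < b) (a : ℝ) :
    ∫ x in Ioi a, Real.exp (-b * x) = Real.exp (-b * a) / b := by
  have hderiv : ∀ x ∈ Ici a,
      HasDerivAt (fun x => -Real.exp (-b * x) / b) (Real.exp (-b * x)) x := by
    intro x _
    have h1 : HasDerivAt (fun x : ℝ => -b * x) (-b) x := by
      simpa using (hasDerivAt_id x).const_mul (-b)
    have h2 := h1.exp.neg.div_const b
    exact h2.congr_deriv (by rw [div_eq_iff hb.ne']; ring)
  have hint := exp_neg_integrableOn_Ioi a hb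
  have hlim : Tendsto (fun x => -Real.exp (-b * x) / b) atTop (𝓝 0) := by
    have h0 : Tendsto (fun x : ℝ => Real.exp (-b * x)) atTop (𝓝 0) :=
      tendsto_exp_atBot.comp (tendsto_id.const_mul_atTop_of_neg (neg_neg_iff_pos.2 hb))
    simpa using (h0.neg).div_const b
  have := integral_Ioi_of_hasDerivAt_of_tendsto' hderiv hint hlim
  rw [this]; ring

set_option maxHeartbeats 1000000 in
/-- (Analytic core of the blow-up rate computation.)
If `h : [0,∞) → (0,1]` decays exactly like `e^{-λτ}` up to sub-exponential factors
(i.e. `e^{(λ+ε)τ} h(τ) → ∞` and `e^{(λ-ε)τ} h(τ) → 0` for every `ε > 0`) and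
`q̃ : [0,∞) → [δ,1]`, both continuous, then for every `τ ≥ 0` the tail integral
`T(τ) = ∫_τ^∞ q̃(σ) h(σ)^k dσ` is finite, `e^{(kλ+ε)τ} T(τ) → ∞` and
`e^{(kλ-ε)τ} T(τ) → 0` for every `ε > 0`; equivalently `(ln T(τ))/τ → -kλ`. -/
theorem tail_integral_rate
    (k lam δ : ℝ) (hk : 0 < k) (hlam : 0 < lam) (hδ0 : 0 < δ) (hδ1 : δ ≤ 1)
    (h qt : ℝ → ℝ)
    (hh : ContinuousOn h (Ici 0)) (hq : ContinuousOn qt (Ici 0))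
    (hhmem : ∀ τ ∈ Ici (0 : ℝ), h τ ∈ Ioc (0 : ℝ) 1)
    (hqmem : ∀ τ ∈ Ici (0 : ℝ), qt τ ∈ Icc δ 1)
    (hfast : ∀ ε > (0 : ℝ),
      Tendsto (fun τ => Real.exp ((lam + ε) * τ) * h τ) atTop atTop)
    (hslow : ∀ ε > (0 : ℝ),
      Tendsto (fun τ => Real.exp ((lam - ε) * τ) * h τ) atTop (𝓝 0)) :
    (∀ τ ≥ (0 : ℝ), IntegrableOn (fun σ => qt σ * h σ ^ k) (Ici τ)) ∧
    (∀ ε > (0 : ℝ),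
      Tendsto (fun τ => Real.exp ((k * lam + ε) * τ) * ∫ σ in Ici τ, qt σ * h σ ^ k)
        atTop atTop) ∧
    (∀ ε > (0 : ℝ),
      Tendsto (fun τ => Real.exp ((k * lam - ε) * τ) * ∫ σ in Ici τ, qt σ * h σ ^ k)
        atTop (𝓝 0)) ∧
    Tendsto (fun τ => Real.log (∫ σ in Ici τ, qt σ * h σ ^ k) / τ)
      atTop (𝓝 (-(k * lam))) := by
  set f : ℝ → ℝ := fun σ => qt σ * h σ ^ k with hfdef
  -- continuity of f on [0, ∞)
  have hfc : ContinuousOn f (Ici 0) :=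
    hq.mul (hh.rpow_const fun x hx => Or.inr hk.le)
  -- pointwise positivity of f
  have hfpos : ∀ σ ∈ Ici (0:ℝ), 0 < f σ := fun σ hσ =>
    mul_pos (lt_of_lt_of_le hδ0 (hqmem σ hσ).1) (rpow_pos_of_pos (hhmem σ hσ).1 k)
  -- eventual upper/lower bounds on h
  have hup : ∀ ε > (0:ℝ), ∀ᶠ σ in atTop, h σ ≤ Real.exp (-(lam - ε) * σ) := by
    intro ε hε
    filter_upwards [(hslow ε hε).eventually (gt_mem_nhds one_pos)] with σ hσ
    have h2 := mul_lt_mul_of_pos_left hσ (exp_pos (-(lam - ε) * σ))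
    have e1 : Real.exp (-(lam - ε) * σ) * Real.exp ((lam - ε) * σ) = 1 := by
      rw [← Real.exp_add, neg_mul, neg_add_cancel, Real.exp_zero]
    rw [← mul_assoc, e1, one_mul, mul_one] at h2
    exact h2.le
  have hlo : ∀ ε > (0:ℝ), ∀ᶠ σ in atTop, Real.exp (-(lam + ε) * σ) ≤ h σ := by
    intro ε hε
    filter_upwards [(hfast ε hε).eventually (eventually_ge_atTop 1)] with σ hσ
    have h2 := mul_le_mul_of_nonneg_left hσ (exp_pos (-(lam + ε) * σ)).le
    have e1 : Real.exp (-(lam + ε) * σ) * Real.exp ((lam + ε) * σ) = 1 := by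
      rw [← Real.exp_add, neg_mul, neg_add_cancel, Real.exp_zero]
    rw [← mul_assoc, e1, one_mul, mul_one] at h2
    exact h2
  -- eventual bounds on f
  have hfup : ∀ ε > (0:ℝ), ∀ᶠ σ in atTop, f σ ≤ Real.exp (-(k * (lam - ε)) * σ) := by
    intro ε hε
    filter_upwards [hup ε hε, eventually_ge_atTop (0:ℝ)] with σ hσ hσ0
    have hσ0' : σ ∈ Ici (0:ℝ) := hσ0
    have h1 : h σ ^ k ≤ Real.exp (-(lam - ε) * σ) ^ k :=
      Real.rpow_le_rpow (hhmem σ hσ0').1.le hσ hk.le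
    have h2 : Real.exp (-(lam - ε) * σ) ^ k = Real.exp (-(k * (lam - ε)) * σ) := by
      rw [← Real.exp_mul]; ring_nf
    calc f σ ≤ 1 * h σ ^ k := by
          exact mul_le_mul_of_nonneg_right (hqmem σ hσ0').2
            (rpow_pos_of_pos (hhmem σ hσ0').1 k).le
      _ = h σ ^ k := one_mul _
      _ ≤ _ := by rw [← h2]; exact h1
  have hflo : ∀ ε > (0:ℝ), ∀ᶠ σ in atTop,
      δ * Real.exp (-(k * (lam + ε)) * σ) ≤ f σ := by
    intro ε hε
    filter_upwards [hlo ε hε, eventually_ge_atTop (0:ℝ)] with σ hσ hσ0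
    have hσ0' : σ ∈ Ici (0:ℝ) := hσ0
    have h1 : Real.exp (-(lam + ε) * σ) ^ k ≤ h σ ^ k :=
      Real.rpow_le_rpow (exp_pos _).le hσ hk.le
    have h2 : Real.exp (-(lam + ε) * σ) ^ k = Real.exp (-(k * (lam + ε)) * σ) := by
      rw [← Real.exp_mul]; ring_nf
    calc δ * Real.exp (-(k * (lam + ε)) * σ) ≤ δ * h σ ^ k := by
          rw [← h2]; exact mul_le_mul_of_nonneg_left h1 hδ0.le
      _ ≤ f σ := mul_le_mul_of_nonneg_right (hqmem σ hσ0').1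
            (rpow_pos_of_pos (hhmem σ hσ0').1 k).le
  -- integrability
  have hInt : ∀ τ ≥ (0:ℝ), IntegrableOn f (Ici τ) := by
    intro τ hτ
    obtain ⟨M0, hM0⟩ := eventually_atTop.mp (hfup (lam/2) (half_pos hlam))
    set M := max M0 τ with hMdef
    have hMτ : τ ≤ M := le_max_right _ _
    have hM0le : (0:ℝ) ≤ M := le_trans hτ hMτ
    have hsplit : Icc τ M ∪ Ici M = Ici τ := Icc_union_Ici_eq_Ici hMτ
    rw [← hsplit]
    apply IntegrableOn.union
    · exact (hfc.mono (fun x hx => le_trans hτ hx.1)).integrableOn_compact isCompact_Icc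
    · have hc : 0 < k * (lam - lam/2) := by nlinarith
      have hg : IntegrableOn (fun σ => Real.exp (-(k * (lam - lam/2)) * σ)) (Ici M) := by
        rw [integrableOn_Ici_iff_integrableOn_Ioi]
        exact exp_neg_integrableOn_Ioi M hc
      refine Integrable.mono hg
        ((hfc.mono (Ici_subset_Ici.mpr hM0le)).aestronglyMeasurable measurableSet_Ici) ?_
      rw [ae_restrict_iff' measurableSet_Ici]
      refine ae_of_all _ fun σ hσ => ?_
      have hσ0 : σ ∈ Ici (0:ℝ) := le_trans hM0le hσ
      rw [Real.norm_eq_abs, Real.norm_eq_abs, abs_of_pos (hfpos σ hσ0),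
        abs_of_pos (exp_pos _)]
      exact hM0 σ (le_trans (le_max_left _ _) hσ)
  -- the key two-sided bound on the tail integral
  have key : ∀ ε : ℝ, 0 < ε → ε < lam → ∃ M : ℝ, 0 ≤ M ∧ ∀ τ ≥ M,
      δ / (k * (lam + ε)) * Real.exp (-(k * (lam + ε)) * τ) ≤ (∫ σ in Ici τ, f σ) ∧
      (∫ σ in Ici τ, f σ) ≤ 1 / (k * (lam - ε)) * Real.exp (-(k * (lam - ε)) * τ) := by
    intro ε hε hεlam
    obtain ⟨M0, hM0⟩ := eventually_atTop.mp ((hfup ε hε).and (hflo ε hε))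
    refine ⟨max M0 0, le_max_right _ _, fun τ hτ => ?_⟩
    have hτ0 : (0:ℝ) ≤ τ := le_trans (le_max_right _ _) hτ
    have hτM0 : M0 ≤ τ := le_trans (le_max_left _ _) hτ
    have hc1 : 0 < k * (lam + ε) := by positivity
    have hc2 : 0 < k * (lam - ε) := by nlinarith
    have hintf := hInt τ hτ0
    have hintg : IntegrableOn (fun σ => Real.exp (-(k*(lam-ε)) * σ)) (Ici τ) := by
      rw [integrableOn_Ici_iff_integrableOn_Ioi]; exact exp_neg_integrableOn_Ioi τ hc2
    have hintl : IntegrableOn (fun σ => δ * Real.exp (-(k*(lam+ε)) * σ)) (Ici τ) := by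
      have h0 : IntegrableOn (fun σ => Real.exp (-(k*(lam+ε)) * σ)) (Ici τ) := by
        rw [integrableOn_Ici_iff_integrableOn_Ioi]; exact exp_neg_integrableOn_Ioi τ hc1
      exact h0.const_mul δ
    constructor
    · have h1 : (∫ σ in Ici τ, δ * Real.exp (-(k*(lam+ε)) * σ)) ≤ ∫ σ in Ici τ, f σ :=
        setIntegral_mono_on hintl hintf measurableSet_Ici
          (fun σ hσ => (hM0 σ (le_trans hτM0 hσ)).2)
      have h2 : (∫ σ in Ici τ, δ * Real.exp (-(k*(lam+ε)) * σ))
          = δ / (k*(lam+ε)) * Real.exp (-(k*(lam+ε)) * τ) := by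
        rw [integral_Ici_eq_integral_Ioi, integral_const_mul, my_integral_exp_neg_mul_Ioi hc1]
        ring
      linarith
    · have h1 : (∫ σ in Ici τ, f σ) ≤ ∫ σ in Ici τ, Real.exp (-(k*(lam-ε)) * σ) :=
        setIntegral_mono_on hintf hintg measurableSet_Ici
          (fun σ hσ => (hM0 σ (le_trans hτM0 hσ)).1)
      have h2 : (∫ σ in Ici τ, Real.exp (-(k*(lam-ε)) * σ))
          = 1 / (k*(lam-ε)) * Real.exp (-(k*(lam-ε)) * τ) := by
        rw [integral_Ici_eq_integral_Ioi, my_integral_exp_neg_mul_Ioi hc2]; ring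
      linarith
  refine ⟨hInt, ?_, ?_, ?_⟩
  -- part 2
  · intro ε hε
    set ε' := min (ε/(2*k)) (lam/2) with hε'def
    have hε'pos : 0 < ε' := lt_min (by positivity) (half_pos hlam)
    have hε'lam : ε' < lam := lt_of_le_of_lt (min_le_right _ _) (by linarith)
    have hkε' : k * ε' ≤ ε/2 := by
      have h0 := min_le_left (ε/(2*k)) (lam/2)
      calc k * ε' ≤ k * (ε/(2*k)) := mul_le_mul_of_nonneg_left h0 hk.le
        _ = ε/2 := by field_simp
    obtain ⟨M, hM0, hM⟩ := key ε' hε'pos hε'lam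
    set C := δ / (k * (lam + ε')) with hC
    have hCpos : 0 < C := by
      have : 0 < k * (lam + ε') := by positivity
      positivity
    set a := ε - k * ε' with ha
    have hapos : 0 < a := by simp only [ha]; linarith
    have hcomp : Tendsto (fun τ => C * Real.exp (a * τ)) atTop atTop :=
      Tendsto.const_mul_atTop hCpos
        (tendsto_exp_atTop.comp (Tendsto.const_mul_atTop hapos tendsto_id))
    apply tendsto_atTop_mono' atTop ?_ hcomp
    filter_upwards [eventually_ge_atTop M] with τ hτ
    have hlb := (hM τ hτ).1
    have h5 := mul_le_mul_of_nonneg_left hlb (exp_pos ((k*lam+ε)*τ)).le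
    have e1 : Real.exp ((k*lam+ε)*τ) * Real.exp (-(k*(lam+ε'))*τ) = Real.exp (a*τ) := by
      rw [← Real.exp_add]; congr 1; rw [ha]; ring
    calc C * Real.exp (a*τ)
        = Real.exp ((k*lam+ε)*τ) * (C * Real.exp (-(k*(lam+ε'))*τ)) := by rw [← e1]; ring
      _ ≤ Real.exp ((k*lam+ε)*τ) * ∫ σ in Ici τ, f σ := h5
  -- part 3
  · intro ε hε
    set ε' := min (ε/(2*k)) (lam/2) with hε'def
    have hε'pos : 0 < ε' := lt_min (by positivity) (half_pos hlam)
    have hε'lam : ε' < lam := lt_of_le_of_lt (min_le_right _ _) (by linarith)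
    have hkε' : k * ε' ≤ ε/2 := by
      have h0 := min_le_left (ε/(2*k)) (lam/2)
      calc k * ε' ≤ k * (ε/(2*k)) := mul_le_mul_of_nonneg_left h0 hk.le
        _ = ε/2 := by field_simp
    obtain ⟨M, hM0, hM⟩ := key ε' hε'pos hε'lam
    set C := 1 / (k * (lam - ε')) with hC
    set a := ε - k * ε' with ha
    have hapos : 0 < a := by simp only [ha]; linarith
    have hg : Tendsto (fun τ => C * Real.exp (-a * τ)) atTop (𝓝 0) := by
      have h0 : Tendsto (fun τ : ℝ => Real.exp (-a * τ)) atTop (𝓝 0) :=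
        tendsto_exp_atBot.comp (tendsto_id.const_mul_atTop_of_neg (by linarith))
      simpa using h0.const_mul C
    apply squeeze_zero' ?_ ?_ hg
    · filter_upwards [eventually_ge_atTop (max M 0)] with τ hτ
      have hτ0 : (0:ℝ) ≤ τ := le_trans (le_max_right _ _) hτ
      have h6 : (0:ℝ) ≤ ∫ σ in Ici τ, f σ :=
        setIntegral_nonneg measurableSet_Ici fun σ hσ => (hfpos σ (le_trans hτ0 hσ)).le
      positivity
    · filter_upwards [eventually_ge_atTop M] with τ hτ
      have hub := (hM τ hτ).2
      have h5 := mul_le_mul_of_nonneg_left hub (exp_pos ((k*lam-ε)*τ)).le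
      have e1 : Real.exp ((k*lam-ε)*τ) * Real.exp (-(k*(lam-ε'))*τ) = Real.exp (-a*τ) := by
        rw [← Real.exp_add]; congr 1; rw [ha]; ring
      calc Real.exp ((k*lam-ε)*τ) * ∫ σ in Ici τ, f σ
          ≤ Real.exp ((k*lam-ε)*τ) * (C * Real.exp (-(k*(lam-ε'))*τ)) := h5
        _ = C * Real.exp (-a*τ) := by rw [← e1]; ring
  -- part 4
  · rw [Metric.tendsto_atTop]
    intro ε hε
    set ε' := min (ε/(4*k)) (lam/2) with hε'def
    have hε'pos : 0 < ε' := lt_min (by positivity) (half_pos hlam)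
    have hε'lam : ε' < lam := lt_of_le_of_lt (min_le_right _ _) (by linarith)
    have hkε' : k * ε' ≤ ε/4 := by
      have h0 := min_le_left (ε/(4*k)) (lam/2)
      calc k * ε' ≤ k * (ε/(4*k)) := mul_le_mul_of_nonneg_left h0 hk.le
        _ = ε/4 := by field_simp
    obtain ⟨M, hM0, hM⟩ := key ε' hε'pos hε'lam
    set C1 := δ / (k * (lam + ε')) with hC1
    set C2 := 1 / (k * (lam - ε')) with hC2
    have hc1 : 0 < k * (lam + ε') := by positivity
    have hc2 : 0 < k * (lam - ε') := by nlinarith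
    have hC1pos : 0 < C1 := by rw [hC1]; positivity
    have hC2pos : 0 < C2 := by rw [hC2]; positivity
    set S := |Real.log C1| + |Real.log C2| with hS
    refine ⟨max (max M 1) (4*S/ε + 1), fun τ hτ => ?_⟩
    have hτM : M ≤ τ := le_trans (le_trans (le_max_left _ _) (le_max_left _ _)) hτ
    have hτ1 : (1:ℝ) ≤ τ := le_trans (le_trans (le_max_right _ _) (le_max_left _ _)) hτ
    have hτpos : (0:ℝ) < τ := lt_of_lt_of_le one_pos hτ1
    have hτS : S ≤ ε/4 * τ := by
      have h7 : 4*S/ε + 1 ≤ τ := le_trans (le_max_right _ _) hτ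
      have habs : 0 ≤ S := by rw [hS]; positivity
      rw [div_add' _ _ _ (ne_of_gt hε)] at h7
      rw [div_le_iff₀ hε] at h7
      nlinarith
    have hlb := (hM τ hτM).1
    have hub := (hM τ hτM).2
    have hTp : 0 < ∫ σ in Ici τ, f σ := lt_of_lt_of_le (by positivity) hlb
    have hlog_ub : Real.log (∫ σ in Ici τ, f σ) ≤ Real.log C2 + (-(k*(lam-ε'))*τ) := by
      calc Real.log (∫ σ in Ici τ, f σ)
          ≤ Real.log (C2 * Real.exp (-(k*(lam-ε'))*τ)) := Real.log_le_log hTp hub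
        _ = Real.log C2 + (-(k*(lam-ε'))*τ) := by
            rw [Real.log_mul (ne_of_gt hC2pos) (Real.exp_ne_zero _), Real.log_exp]
    have hlog_lb : Real.log C1 + (-(k*(lam+ε'))*τ) ≤ Real.log (∫ σ in Ici τ, f σ) := by
      calc Real.log C1 + (-(k*(lam+ε'))*τ)
          = Real.log (C1 * Real.exp (-(k*(lam+ε'))*τ)) := by
            rw [Real.log_mul (ne_of_gt hC1pos) (Real.exp_ne_zero _), Real.log_exp]
        _ ≤ Real.log (∫ σ in Ici τ, f σ) := Real.log_le_log (by positivity) hlb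
    have hc2' : Real.log C2 ≤ ε/4 * τ := by
      have := le_abs_self (Real.log C2)
      have := abs_nonneg (Real.log C1)
      rw [hS] at hτS; linarith
    have hc1' : -(ε/4 * τ) ≤ Real.log C1 := by
      have := neg_abs_le (Real.log C1)
      have := abs_nonneg (Real.log C2)
      rw [hS] at hτS; linarith
    have h1 : Real.log (∫ σ in Ici τ, f σ) / τ ≤ ε/4 + (-(k*(lam-ε'))) := by
      rw [div_le_iff₀ hτpos]; nlinarith
    have h2 : -(ε/4) + (-(k*(lam+ε'))) ≤ Real.log (∫ σ in Ici τ, f σ) / τ := by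
      rw [le_div_iff₀ hτpos]; nlinarith
    have e3 : k*(lam-ε') = k*lam - k*ε' := by ring
    have e4 : k*(lam+ε') = k*lam + k*ε' := by ring
    rw [Real.dist_eq, abs_lt]
    constructor <;> [linarith; linarith]
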